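/- Suppose d ≥ 3, x_i, x_i' > 0 for i = 1,...,d, x_1^↓ > Σ_{i=2}^d x_i^↓ is false and in fact x_1^↓ < Σ_{i=2}^d x_i^↓ (equivalently all diagonal entries less than 1/2 after normalization), likewise for x'. If Ang(x) ⊆ Ang(x'), then x' = s·x for some real s > 0. -/

import Mathlib

open Finset

open Finset

private lemma abs_eq_of_normSq {z : ℂ} {w : ℝ} (hw : 0 ≤ w)
    (h : Complex.normSq z = w ^ 2) : ‖z‖ = w := by
  rw [Complex.norm_def, h, Real.sqrt_sq hw]

/-- L0: circle target -/
private lemma circle_target (a t t' : ℝ) (ha : 0 < a) (ht : 0 ≤ t)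
    (h1 : |t - a| ≤ t') (h2 : t' ≤ t + a) :
    ∃ ω : ℂ, ‖ω‖ = 1 ∧ ‖(t : ℂ) - a * ω‖ = t' := by
  have ht'0 : 0 ≤ t' := le_trans (abs_nonneg _) h1
  rcases eq_or_lt_of_le ht with h0 | h0
  · -- t = 0
    have hta : t' = a := by
      rw [← h0] at h1 h2
      have : |(0:ℝ) - a| = a := by rw [abs_of_nonpos (by linarith)]; ring
      rw [this] at h1
      linarith
    refine ⟨1, by simp, ?_⟩
    rw [← h0, hta]
    simp [abs_of_nonneg ha.le]
  · -- t > 0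
    have habs : (t - a) ^ 2 ≤ t' ^ 2 := by
      have := sq_abs (t - a)
      nlinarith [abs_nonneg (t - a)]
    set c0 : ℝ := (t ^ 2 + a ^ 2 - t' ^ 2) / (2 * t * a) with hc0def
    have h2ta : 0 < 2 * t * a := by positivity
    have hc1 : c0 ≤ 1 := by
      rw [hc0def, div_le_one h2ta]; nlinarith
    have hc2 : -1 ≤ c0 := by
      rw [hc0def, le_div_iff₀ h2ta]; nlinarith
    have hc0sq : c0 ^ 2 ≤ 1 := by nlinarith
    set s0 : ℝ := Real.sqrt (1 - c0 ^ 2) with hs0def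
    have hs0sq : s0 ^ 2 = 1 - c0 ^ 2 := Real.sq_sqrt (by linarith)
    have hkey : 2 * t * a * c0 = t ^ 2 + a ^ 2 - t' ^ 2 := by
      rw [hc0def]; field_simp
    refine ⟨⟨c0, s0⟩, ?_, ?_⟩
    · apply abs_eq_of_normSq zero_le_one
      rw [Complex.normSq_mk]; nlinarith
    · apply abs_eq_of_normSq ht'0
      have : ((t : ℂ) - a * ⟨c0, s0⟩) = ⟨t - a * c0, -(a * s0)⟩ := by
        apply Complex.ext <;> simp
      rw [this, Complex.normSq_mk]
      nlinarith


/-- L2: polygon reachability -/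
private lemma poly_reach {ι : Type*} [DecidableEq ι] (s : Finset ι) :
    ∀ (y : ι → ℝ) (t : ℝ), (∀ k ∈ s, 0 < y k) → 0 ≤ t → t ≤ ∑ k ∈ s, y k →
    (∀ k ∈ s, 2 * y k ≤ t + ∑ k ∈ s, y k) →
    ∃ ω : ι → ℂ, (∀ k, ‖ω k‖ = 1) ∧ ∑ k ∈ s, (y k : ℂ) * ω k = (t : ℂ) := by
  induction s using Finset.induction_on with
  | empty =>
    intro y t _ ht hts _
    have : t = 0 := le_antisymm (by simpa using hts) ht
    exact ⟨fun _ => 1, fun _ => by simp, by simp [this]⟩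
  | insert a s ha IH =>
    intro y t hpos ht hsum hpoly
    set A := y a with hA
    set S := ∑ k ∈ s, y k with hS
    have hApos : 0 < A := hpos a (mem_insert_self a s)
    have hsum' : t ≤ A + S := by rwa [Finset.sum_insert ha] at hsum
    have hpoly' : ∀ k ∈ insert a s, 2 * y k ≤ t + (A + S) := by
      intro k hk; rw [← Finset.sum_insert ha]; exact hpoly k hk
    have hSnn : 0 ≤ S := Finset.sum_nonneg fun k hk => (hpos k (mem_insert_of_mem hk)).le
    set t' : ℝ := s.fold max |t - A| (fun k => 2 * y k - S) with ht'def
    have hbase : |t - A| ≤ t' := (Finset.le_fold_max _).2 (Or.inl le_rfl)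
    have helt : ∀ k ∈ s, 2 * y k - S ≤ t' := fun k hk =>
      (Finset.le_fold_max _).2 (Or.inr ⟨k, hk, le_rfl⟩)
    have ht'0 : 0 ≤ t' := le_trans (abs_nonneg _) hbase
    have ht'S : t' ≤ S := by
      apply (Finset.fold_max_le _).2
      constructor
      · rw [abs_le]
        have := hpoly' a (mem_insert_self a s)
        constructor <;> linarith
      · intro k hk
        have : y k ≤ S := Finset.single_le_sum (fun j hj => (hpos j (mem_insert_of_mem hj)).le) hk
        linarith
    have ht'ta : t' ≤ t + A := by
      apply (Finset.fold_max_le _).2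
      refine ⟨by rw [abs_le]; constructor <;> linarith, fun k hk => ?_⟩
      have := hpoly' k (mem_insert_of_mem hk)
      linarith
    obtain ⟨η, hη1, hη2⟩ := IH y t' (fun k hk => hpos k (mem_insert_of_mem hk)) ht'0 ht'S
      (fun k hk => by linarith [helt k hk])
    obtain ⟨ωa, hωa1, hωa2⟩ := circle_target A t t' hApos ht hbase ht'ta
    set z : ℂ := (t : ℂ) - A * ωa with hz
    set ζ : ℂ := if t' = 0 then 1 else z / (t' : ℂ) with hζdef
    have hζ1 : ‖ζ‖ = 1 := by
      rw [hζdef]; split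
      · simp
      · rename_i h
        rw [norm_div, hωa2, Complex.norm_real, Real.norm_eq_abs, abs_of_nonneg ht'0, div_self h]
    have hζt' : ζ * (t' : ℂ) = z := by
      rw [hζdef]; split
      · rename_i h
        have : z = 0 := by
          have := hωa2; rw [h] at this
          exact norm_eq_zero.1 (by simpa using this)
        simp [this, h]
      · rename_i h
        have h' : (t' : ℂ) ≠ 0 := by exact_mod_cast h
        field_simp
    refine ⟨fun k => if k = a then ωa else ζ * η k, fun k => ?_, ?_⟩
    · by_cases hk : k = a
      · simp [hk, hωa1]
      · simp [hk, norm_mul, hζ1, hη1 k]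
    · rw [Finset.sum_insert ha]
      have : ∑ k ∈ s, (y k : ℂ) * (if k = a then ωa else ζ * η k)
          = ζ * ∑ k ∈ s, (y k : ℂ) * η k := by
        rw [Finset.mul_sum]
        apply Finset.sum_congr rfl
        intro k hk
        rw [if_neg (ne_of_mem_of_not_mem hk ha)]
        ring
      simp only [eq_self_iff_true, if_true]
      rw [this, hη2, hζt', hz]
      ring

/-- L1: two distinct solutions of a ω + b η = -c on the torus -/
private lemma two_sol (a b : ℝ) (c : ℂ) (ha : 0 < a) (hb : 0 < b)
    (h1 : |a - b| < ‖c‖) (h2 : ‖c‖ < a + b) :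
    ∃ ω1 η1 ω2 η2 : ℂ, ‖ω1‖ = 1 ∧ ‖η1‖ = 1 ∧
      ‖ω2‖ = 1 ∧ ‖η2‖ = 1 ∧
      (a : ℂ) * ω1 + b * η1 = -c ∧ (a : ℂ) * ω2 + b * η2 = -c ∧ ω1 ≠ ω2 := by
  set r : ℝ := ‖c‖ with hrdef
  have hr : 0 < r := lt_of_le_of_lt (abs_nonneg _) h1
  have hab1 : a - b < r := lt_of_le_of_lt (le_abs_self _) h1
  have hab2 : b - a < r := by
    have := neg_le_abs (a - b); linarith
  set e : ℂ := c / (r : ℂ) with hedef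
  have hrne : (r : ℂ) ≠ 0 := by exact_mod_cast hr.ne'
  have he : ‖e‖ = 1 := by
    rw [hedef, norm_div, Complex.norm_real, Real.norm_eq_abs, abs_of_nonneg hr.le, div_self hr.ne']
  have hene : e ≠ 0 := by
    intro h; rw [h] at he; simp at he
  have hc : (r : ℂ) * e = c := by rw [hedef]; field_simp
  set A : ℝ := (r ^ 2 + a ^ 2 - b ^ 2) / (2 * r) with hAdef
  have hA2 : A ^ 2 < a ^ 2 := by
    rw [hAdef, div_pow, div_lt_iff₀ (by positivity)]
    nlinarith [mul_pos (mul_pos (by linarith : (0:ℝ) < r + a + b) (by linarith : (0:ℝ) < r + a - b))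
      (mul_pos (by linarith : (0:ℝ) < r - a + b) (by linarith : (0:ℝ) < a + b - r))]
  set B : ℝ := Real.sqrt (a ^ 2 - A ^ 2) with hBdef
  have hB2 : B ^ 2 = a ^ 2 - A ^ 2 := Real.sq_sqrt (by linarith)
  have hBpos : 0 < B := Real.sqrt_pos.2 (by linarith)
  have h2rA : 2 * r * A = r ^ 2 + a ^ 2 - b ^ 2 := by rw [hAdef]; field_simp
  set p1 : ℂ := e * ⟨-A, B⟩ with hp1
  set p2 : ℂ := e * ⟨-A, -B⟩ with hp2
  have habsp : ∀ s : ℝ, s ^ 2 = B ^ 2 → ‖e * ⟨-A, s⟩‖ = a := by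
    intro s hs
    rw [norm_mul, he, one_mul]
    apply abs_eq_of_normSq ha.le
    rw [Complex.normSq_mk]; nlinarith
  have habsq : ∀ s : ℝ, s ^ 2 = B ^ 2 → ‖-c - e * ⟨-A, s⟩‖ = b := by
    intro s hs
    have : -c - e * ⟨-A, s⟩ = e * ⟨A - r, -s⟩ := by
      rw [← hc]; apply Complex.ext <;> simp <;> ring
    rw [this, norm_mul, he, one_mul]
    apply abs_eq_of_normSq hb.le
    rw [Complex.normSq_mk]; nlinarith
  have hane : (a : ℂ) ≠ 0 := by exact_mod_cast ha.ne'
  have hbne : (b : ℂ) ≠ 0 := by exact_mod_cast hb.ne'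
  refine ⟨p1 / a, (-c - p1) / b, p2 / a, (-c - p2) / b, ?_, ?_, ?_, ?_, ?_, ?_, ?_⟩
  · rw [norm_div, hp1, habsp B rfl, Complex.norm_real, Real.norm_eq_abs, abs_of_nonneg ha.le, div_self ha.ne']
  · rw [norm_div, hp1, habsq B rfl, Complex.norm_real, Real.norm_eq_abs, abs_of_nonneg hb.le, div_self hb.ne']
  · rw [norm_div, hp2, habsp (-B) (by ring), Complex.norm_real, Real.norm_eq_abs, abs_of_nonneg ha.le, div_self ha.ne']
  · rw [norm_div, hp2, habsq (-B) (by ring), Complex.norm_real, Real.norm_eq_abs, abs_of_nonneg hb.le, div_self hb.ne']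
  · field_simp; ring
  · field_simp; ring
  · intro h
    have hp : p1 = p2 := by
      field_simp at h
      exact h
    rw [hp1, hp2] at hp
    have := mul_left_cancel₀ hene hp
    have : (⟨-A, B⟩ : ℂ).im = (⟨-A, -B⟩ : ℂ).im := by rw [this]
    simp at this
    linarith


private lemma key_pair (d : ℕ) (x x' : Fin (d + 1) → ℝ)
    (hx : ∀ i, 0 < x i)
    (hpoly : ∀ i, 2 * x i < ∑ j, x j)
    (hsub : {ω : Fin d → ℂ | (∀ i, ‖ω i‖ = 1) ∧
        (∑ i : Fin d, (x i.castSucc : ℂ) * ω i) + (x (Fin.last d) : ℂ) = 0} ⊆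
      {ω : Fin d → ℂ | (∀ i, ‖ω i‖ = 1) ∧
        (∑ i : Fin d, (x' i.castSucc : ℂ) * ω i) + (x' (Fin.last d) : ℂ) = 0})
    (i j : Fin d) (hij : i ≠ j) :
    x' i.castSucc * x j.castSucc = x i.castSucc * x' j.castSucc ∧
    ∃ ν : Fin d → ℂ, (∀ k, ‖ν k‖ = 1) ∧
      (∑ k : Fin d, (x k.castSucc : ℂ) * ν k) + (x (Fin.last d) : ℂ) = 0 ∧
      (∑ k : Fin d, (x' k.castSucc : ℂ) * ν k) + (x' (Fin.last d) : ℂ) = 0 := by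
  set L := Fin.last d with hLdef
  set i' := i.castSucc with hi'def
  set j' := j.castSucc with hj'def
  have hij' : i' ≠ j' := fun h => hij (Fin.castSucc_injective d h)
  have hiL : i' ≠ L := (Fin.castSucc_lt_last i).ne
  have hjL : j' ≠ L := (Fin.castSucc_lt_last j).ne
  set s0 : Finset (Fin (d+1)) := univ \ {i', j'} with hs0
  have hLs0 : L ∈ s0 := by
    rw [hs0, Finset.mem_sdiff]
    exact ⟨mem_univ _, by simp [hiL.symm, hjL.symm]⟩
  set S' := ∑ k ∈ s0, x k with hS'
  set T := ∑ k, x k with hT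
  have hsplit : S' + (x i' + x j') = T := by
    rw [hS', hT, ← Finset.sum_pair hij']
    exact Finset.sum_sdiff (Finset.subset_univ _)
  have hpolyi := hpoly i'
  have hpolyj := hpoly j'
  set lo := |x i' - x j'| with hlo
  set hi := x i' + x j' with hhi
  have hloS : lo < S' := abs_sub_lt_iff.2 ⟨by linarith, by linarith⟩
  have hlohi : lo < hi := abs_sub_lt_iff.2 ⟨by linarith [hx j'], by linarith [hx i']⟩
  set m1 := s0.fold max lo (fun k => 2 * x k - S') with hm1
  have hm1hi : m1 < hi := (Finset.fold_max_lt _).2 ⟨hlohi, fun k _ => by linarith [hpoly k]⟩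
  have hm1S : m1 ≤ S' := (Finset.fold_max_le _).2 ⟨hloS.le, fun k hk => by
    have : x k ≤ S' := Finset.single_le_sum (f := x) (fun m _ => (hx m).le) hk
    linarith⟩
  have hlom1 : lo ≤ m1 := (Finset.le_fold_max _).2 (Or.inl le_rfl)
  set t := min S' ((m1 + hi)/2) with htdef
  have htlo : lo < t := lt_min hloS (by linarith)
  have hthi : t < hi := lt_of_le_of_lt (min_le_right _ _) (by linarith)
  have htm1 : m1 ≤ t := le_min hm1S (by linarith)
  have ht0 : 0 ≤ t := le_of_lt (lt_of_le_of_lt (abs_nonneg _) htlo)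
  obtain ⟨η, hη1, hη2⟩ := poly_reach s0 x t (fun k _ => hx k) ht0 (min_le_left _ _)
    (fun k hk => by
      have : 2 * x k - S' ≤ m1 := (Finset.le_fold_max _).2 (Or.inr ⟨k, hk, le_rfl⟩)
      linarith)
  have hηLne : η L ≠ 0 := by
    intro h; have := hη1 L; rw [h] at this; simp at this
  set β : Fin (d+1) → ℂ := fun k => η k / η L with hβ
  have hβ1 : ∀ k, ‖β k‖ = 1 := fun k => by
    rw [hβ]; simp only [norm_div, hη1]; norm_num
  have hβL : β L = 1 := div_self hηLne
  set c' : ℂ := (t : ℂ) / η L with hc'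
  have hc'abs : ‖c'‖ = t := by
    rw [hc', norm_div, hη1 L, Complex.norm_real, Real.norm_eq_abs, abs_of_nonneg ht0, div_one]
  have hsumβ : ∑ k ∈ s0, (x k : ℂ) * β k = c' := by
    rw [hc', ← hη2, Finset.sum_div]
    exact Finset.sum_congr rfl (fun k _ => by rw [hβ, mul_div_assoc])
  obtain ⟨ω1, ρ1, ω2, ρ2, hω1a, hρ1a, hω2a, hρ2a, heq1, heq2, hne⟩ :=
    two_sol (x i') (x j') c' (hx i') (hx j') (by rw [hc'abs]; exact htlo) (by rw [hc'abs]; exact hthi)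
  have sum_eq : ∀ p q : ℂ, (∑ k : Fin d, (x k.castSucc : ℂ) *
      (if k = i then p else if k = j then q else β k.castSucc))
      = (x i' : ℂ) * p + (x j' : ℂ) * q + (c' - (x L : ℂ)) := by
    intro p q
    set G : Fin (d+1) → ℂ := fun m => if m = i' then p else if m = j' then q else β m with hGdef
    have hGi : G i' = p := by rw [hGdef]; simp
    have hGj : G j' = q := by rw [hGdef]; simp [hij'.symm, hij']
    have hGL : G L = 1 := by
      show (if L = i' then p else if L = j' then q else β L) = 1
      rw [if_neg (Ne.symm hiL), if_neg (Ne.symm hjL), hβL]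
    have hfix : ∀ k : Fin d, (if k = i then p else if k = j then q else β k.castSucc) = G k.castSucc := by
      intro k
      rw [hGdef, hi'def, hj'def]
      simp only [Fin.castSucc_inj]
    have hfull : ∑ m, (x m : ℂ) * G m = c' + ((x i' : ℂ) * p + (x j' : ℂ) * q) := by
      rw [← Finset.sum_sdiff (s₁ := ({i', j'} : Finset (Fin (d+1)))) (Finset.subset_univ _)]
      congr 1
      · rw [← hsumβ]
        apply Finset.sum_congr rfl
        intro m hm
        rw [Finset.mem_sdiff, Finset.mem_insert, Finset.mem_singleton] at hm
        push_neg at hm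
        rw [hGdef]
        simp only [if_neg hm.2.1, if_neg hm.2.2]
      · rw [Finset.sum_pair hij', hGi, hGj]
    have hcast : ∑ m, (x m : ℂ) * G m
        = (∑ k : Fin d, (x k.castSucc : ℂ) * G k.castSucc) + (x L : ℂ) * G L :=
      Fin.sum_univ_castSucc _
    calc ∑ k : Fin d, (x k.castSucc : ℂ) *
          (if k = i then p else if k = j then q else β k.castSucc)
        = ∑ k : Fin d, (x k.castSucc : ℂ) * G k.castSucc :=
          Finset.sum_congr rfl (fun k _ => by rw [hfix k])
      _ = ∑ m, (x m : ℂ) * G m - (x L : ℂ) * G L := by rw [hcast]; ring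
      _ = (x i' : ℂ) * p + (x j' : ℂ) * q + (c' - (x L : ℂ)) := by
          rw [hfull, hGL]; ring
  set ν1 : Fin d → ℂ := fun k => if k = i then ω1 else if k = j then ρ1 else β k.castSucc with hν1
  set ν2 : Fin d → ℂ := fun k => if k = i then ω2 else if k = j then ρ2 else β k.castSucc with hν2
  have hν1abs : ∀ k, ‖ν1 k‖ = 1 := by
    intro k; rw [hν1]
    by_cases h1 : k = i
    · simp [h1, hω1a]
    · by_cases h2 : k = j
      · simp [h1, h2, hρ1a, Ne.symm hij]
      · simp [h1, h2, hβ1]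
  have hν2abs : ∀ k, ‖ν2 k‖ = 1 := by
    intro k; rw [hν2]
    by_cases h1 : k = i
    · simp [h1, hω2a]
    · by_cases h2 : k = j
      · simp [h1, h2, hρ2a, Ne.symm hij]
      · simp [h1, h2, hβ1]
  have hν1x : (∑ k : Fin d, (x k.castSucc : ℂ) * ν1 k) + (x L : ℂ) = 0 := by
    rw [hν1, sum_eq ω1 ρ1]
    linear_combination heq1
  have hν2x : (∑ k : Fin d, (x k.castSucc : ℂ) * ν2 k) + (x L : ℂ) = 0 := by
    rw [hν2, sum_eq ω2 ρ2]
    linear_combination heq2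
  have hν1x' := (hsub ⟨hν1abs, hν1x⟩).2
  have hν2x' := (hsub ⟨hν2abs, hν2x⟩).2
  have hdiff : (x' i' : ℂ) * (ω1 - ω2) + (x' j' : ℂ) * (ρ1 - ρ2) = 0 := by
    have hsub0 : ∑ k : Fin d, ((x' k.castSucc : ℂ) * ν1 k - (x' k.castSucc : ℂ) * ν2 k) = 0 := by
      rw [Finset.sum_sub_distrib]
      have h1 : ∑ k : Fin d, (x' k.castSucc : ℂ) * ν1 k = -(x' L : ℂ) := by
        linear_combination hν1x'
      have h2 : ∑ k : Fin d, (x' k.castSucc : ℂ) * ν2 k = -(x' L : ℂ) := by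
        linear_combination hν2x'
      rw [h1, h2]; ring
    rw [Finset.sum_eq_add_of_mem i j (mem_univ i) (mem_univ j) hij ?hz] at hsub0
    · rw [hν1, hν2] at hsub0
      simp only [eq_self_iff_true, if_true, if_neg hij, if_neg (Ne.symm hij)] at hsub0
      linear_combination hsub0
    case hz =>
      intro k _ hk
      rw [hν1, hν2]
      simp only [if_neg hk.1, if_neg hk.2]
      ring
  have hdx : (x i' : ℂ) * (ω1 - ω2) + (x j' : ℂ) * (ρ1 - ρ2) = 0 := by
    linear_combination heq1 - heq2
  have hune : ω1 - ω2 ≠ 0 := sub_ne_zero.2 hne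
  have hcross : ((x' i' * x j' : ℝ) : ℂ) = ((x i' * x' j' : ℝ) : ℂ) := by
    have hmul : ((x' i' * x j' : ℝ) : ℂ) * (ω1 - ω2) = ((x i' * x' j' : ℝ) : ℂ) * (ω1 - ω2) := by
      push_cast
      linear_combination (x j' : ℂ) * hdiff - (x' j' : ℂ) * hdx
    exact mul_right_cancel₀ hune hmul
  exact ⟨Complex.ofReal_inj.1 hcross, ν1, hν1abs, hν1x, hν1x'⟩


/-- If d ≥ 3, all entries of x, x' are positive, both satisfy the strict polygon
    inequality (every entry is less than the sum of the others), and
    Ang(x) ⊆ Ang(x'), then x' is a positive multiple of x. -/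
theorem stmt15 (d : ℕ) (hd : 2 ≤ d) (x x' : Fin (d + 1) → ℝ)
    (hx : ∀ i, 0 < x i) (hx' : ∀ i, 0 < x' i)
    (hpoly : ∀ i, 2 * x i < ∑ j, x j) (hpoly' : ∀ i, 2 * x' i < ∑ j, x' j)
    (hsub : {ω : Fin d → ℂ | (∀ i, ‖ω i‖ = 1) ∧
        (∑ i : Fin d, (x i.castSucc : ℂ) * ω i) + (x (Fin.last d) : ℂ) = 0} ⊆
      {ω : Fin d → ℂ | (∀ i, ‖ω i‖ = 1) ∧
        (∑ i : Fin d, (x' i.castSucc : ℂ) * ω i) + (x' (Fin.last d) : ℂ) = 0}) :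
    ∃ s : ℝ, 0 < s ∧ x' = s • x := by
  have hd0 : 0 < d := by omega
  have hd1 : 1 < d := by omega
  set L := Fin.last d with hL
  let i0 : Fin d := ⟨0, hd0⟩
  let i1 : Fin d := ⟨1, hd1⟩
  have h01 : i0 ≠ i1 := by simp [i0, i1, Fin.ext_iff]
  set s : ℝ := x' i0.castSucc / x i0.castSucc with hs
  have hspos : 0 < s := div_pos (hx' _) (hx _)
  have hcs : ∀ m : Fin d, x' m.castSucc = s * x m.castSucc := by
    intro m
    by_cases hm : m = i0
    · rw [hm, hs]
      field_simp
      rw [mul_div_assoc, div_self (hx i0.castSucc).ne', mul_one]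
    · have hkey := (key_pair d x x' hx hpoly hsub i0 m (fun h => hm h.symm)).1
      rw [hs]
      rw [div_mul_eq_mul_div, eq_div_iff (hx i0.castSucc).ne']
      linear_combination -hkey
  obtain ⟨-, ν, hνabs, hνx, hνx'⟩ := key_pair d x x' hx hpoly hsub i0 i1 h01
  have hsum' : ∑ k : Fin d, (x' k.castSucc : ℂ) * ν k
      = (s : ℂ) * ∑ k : Fin d, (x k.castSucc : ℂ) * ν k := by
    rw [Finset.mul_sum]
    apply Finset.sum_congr rfl
    intro k _
    rw [hcs k]
    push_cast
    ring
  have hlast : ((x' L : ℝ) : ℂ) = ((s * x L : ℝ) : ℂ) := by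
    push_cast
    linear_combination hνx' - hsum' - (s : ℂ) * hνx
  have hlastR : x' L = s * x L := by exact_mod_cast hlast
  refine ⟨s, hspos, funext fun m => ?_⟩
  rw [Pi.smul_apply, smul_eq_mul]
  induction m using Fin.lastCases with
  | last => exact hlastR
  | cast k => exact hcs k
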